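/- Let R be a semiprime ring and m, n positive integers. If [[R,R]^m, [R,R]^n] = 0, then R is commutative. -/
import Mathlib

/-- The additive subgroup generated by commutators `a*b - b*a` with `a ∈ A`, `b ∈ B`. -/
def commSG (R : Type*) [NonUnitalRing R] (A B : Set R) : AddSubgroup R :=
  AddSubgroup.closure {x | ∃ a ∈ A, ∃ b ∈ B, x = a * b - b * a}

/-- The additive subgroup generated by products `a*b` with `a ∈ A`, `b ∈ B`. -/
def prodSG (R : Type*) [NonUnitalRing R] (A B : Set R) : AddSubgroup R :=
  AddSubgroup.closure {x | ∃ a ∈ A, ∃ b ∈ B, x = a * b}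

/-- `L` is a Lie ideal of `R`. -/
def IsLieIdeal (R : Type*) [NonUnitalRing R] (L : AddSubgroup R) : Prop :=
  ∀ a ∈ L, ∀ r : R, a * r - r * a ∈ L

/-- `sgPow R L n` is the additive subgroup `L^(n+1)` generated by products of `n+1`
elements of `L`. -/
def sgPow (R : Type*) [NonUnitalRing R] (L : AddSubgroup R) : ℕ → AddSubgroup R
  | 0 => L
  | n + 1 => prodSG R (sgPow R L n) L

/-- `R` is a semiprime ring. -/
def IsSemiprimeRing (R : Type*) [NonUnitalRing R] : Prop :=
  ∀ a : R, (∀ x : R, a * x * a = 0) → a = 0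

/-- `R` is a prime ring. -/
def IsPrimeRing (R : Type*) [NonUnitalRing R] : Prop :=
  ∀ a b : R, (∀ x : R, a * x * b = 0) → a = 0 ∨ b = 0

abbrev CP (R : Type*) [NonUnitalRing R] (k : ℕ) : AddSubgroup R :=
  sgPow R (commSG R Set.univ Set.univ) k

section Infra

variable {R : Type*} [NonUnitalRing R]

theorem mem_comm' (x y : R) : x * y - y * x ∈ CP R 0 :=
  AddSubgroup.subset_closure ⟨x, Set.mem_univ x, y, Set.mem_univ y, rfl⟩

theorem cp_mul : ∀ (b a : ℕ) (x y : R), x ∈ CP R a → y ∈ CP R b → x * y ∈ CP R (a + b + 1) := by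
  intro b
  induction b with
  | zero =>
    intro a x y hx hy
    exact AddSubgroup.subset_closure ⟨x, hx, y, hy, rfl⟩
  | succ b ih =>
    intro a x y hx hy
    have hy' : y ∈ AddSubgroup.closure
        {p : R | ∃ u ∈ (CP R b : Set R), ∃ c ∈ (CP R 0 : Set R), p = u * c} := hy
    refine AddSubgroup.closure_induction
      (p := fun z _ => x * z ∈ CP R (a + b + 1 + 1)) ?_ ?_ ?_ ?_ hy'
    · rintro z ⟨u, hu, c, hc, rfl⟩
      rw [← mul_assoc]
      exact AddSubgroup.subset_closure ⟨x * u, ih a x u hx hu, c, hc, rfl⟩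
    · show x * 0 ∈ CP R (a + b + 1 + 1)
      rw [mul_zero]; exact zero_mem _
    · intro z₁ z₂ h₁ h₂ p₁ p₂
      show x * (z₁ + z₂) ∈ CP R (a + b + 1 + 1)
      rw [mul_add]; exact add_mem p₁ p₂
    · intro z hz p
      show x * (-z) ∈ CP R (a + b + 1 + 1)
      rw [mul_neg]; exact neg_mem p

theorem cp_mul' {a b c : ℕ} {x y : R} (hx : x ∈ CP R a) (hy : y ∈ CP R b)
    (h : a + b + 1 = c) : x * y ∈ CP R c := h ▸ cp_mul b a x y hx hy

theorem cp_lie : ∀ (k : ℕ) (x : R), x ∈ CP R k → ∀ r : R, x * r - r * x ∈ CP R k := by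
  intro k
  induction k with
  | zero => intro x _ r; exact mem_comm' x r
  | succ k ih =>
    intro x hx r
    have hx' : x ∈ AddSubgroup.closure
        {p : R | ∃ u ∈ (CP R k : Set R), ∃ c ∈ (CP R 0 : Set R), p = u * c} := hx
    refine AddSubgroup.closure_induction
      (p := fun z _ => z * r - r * z ∈ CP R (k + 1)) ?_ ?_ ?_ ?_ hx'
    · rintro z ⟨u, hu, c, hc, rfl⟩
      have key : (u * c) * r - r * (u * c) = u * (c * r - r * c) + (u * r - r * u) * c := by
        noncomm_ring
      rw [key]
      exact add_mem (cp_mul 0 k u _ hu (mem_comm' c r)) (cp_mul 0 k _ c (ih u hu r) hc)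
    · show (0 : R) * r - r * 0 ∈ CP R (k + 1)
      simpa using zero_mem (CP R (k+1))
    · intro z₁ z₂ h₁ h₂ p₁ p₂
      show (z₁ + z₂) * r - r * (z₁ + z₂) ∈ CP R (k + 1)
      have key : (z₁ + z₂) * r - r * (z₁ + z₂) = (z₁ * r - r * z₁) + (z₂ * r - r * z₂) := by
        noncomm_ring
      rw [key]; exact add_mem p₁ p₂
    · intro z hz p
      show (-z) * r - r * (-z) ∈ CP R (k + 1)
      have key : (-z) * r - r * (-z) = -(z * r - r * z) := by noncomm_ring
      rw [key]; exact neg_mem p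

theorem cp_split : ∀ (b a : ℕ) (x : R), x ∈ CP R (a + b + 1) →
    x ∈ prodSG R (CP R a) (CP R b) := by
  intro b
  induction b with
  | zero => intro a x hx; exact hx
  | succ b ih =>
    intro a x hx
    have hx' : x ∈ AddSubgroup.closure
        {p : R | ∃ u ∈ (CP R (a + b + 1) : Set R), ∃ c ∈ (CP R 0 : Set R), p = u * c} := hx
    refine AddSubgroup.closure_induction
      (p := fun z _ => z ∈ prodSG R (CP R a) (CP R (b + 1))) ?_ ?_ ?_ ?_ hx'
    · rintro z ⟨u, hu, c, hc, rfl⟩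
      have hu2 : u ∈ AddSubgroup.closure
          {p : R | ∃ v ∈ (CP R a : Set R), ∃ w ∈ (CP R b : Set R), p = v * w} := ih a u hu
      refine AddSubgroup.closure_induction
        (p := fun z _ => z * c ∈ prodSG R (CP R a) (CP R (b + 1))) ?_ ?_ ?_ ?_ hu2
      · rintro z ⟨v, hv, w, hw, rfl⟩
        rw [mul_assoc]
        exact AddSubgroup.subset_closure ⟨v, hv, w * c, cp_mul 0 b w c hw hc, rfl⟩
      · show (0 : R) * c ∈ prodSG R (CP R a) (CP R (b + 1))
        rw [zero_mul]; exact zero_mem _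
      · intro z₁ z₂ h₁ h₂ p₁ p₂
        show (z₁ + z₂) * c ∈ prodSG R (CP R a) (CP R (b + 1))
        rw [add_mul]; exact add_mem p₁ p₂
      · intro z hz p
        show (-z) * c ∈ prodSG R (CP R a) (CP R (b + 1))
        rw [neg_mul]; exact neg_mem p
    · exact zero_mem _
    · intro z₁ z₂ h₁ h₂ p₁ p₂; exact add_mem p₁ p₂
    · intro z hz p; exact neg_mem p

end Infra

section Reduce

variable {R : Type*} [NonUnitalRing R] (m' n' : ℕ)

theorem CM1 (h : ∀ x ∈ CP R m', ∀ y ∈ CP R n', x * y = y * x) : ∀ (k : ℕ), ∀ v ∈ CP R (k * (m' + 1) + m'), ∀ B ∈ CP R n', v * B = B * v := by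
  intro k
  induction k with
  | zero =>
    intro v hv B hB
    exact h v (by simpa using hv) B hB
  | succ k ih =>
    intro v hv B hB
    have hv' : v ∈ CP R ((k * (m' + 1) + m') + m' + 1) := by
      have e : (k * (m' + 1) + m') + m' + 1 = (k+1) * (m' + 1) + m' := by ring
      rw [e]; exact hv
    have hsplit : v ∈ AddSubgroup.closure
        {p : R | ∃ u ∈ (CP R (k * (m' + 1) + m') : Set R), ∃ c ∈ (CP R m' : Set R), p = u * c} :=
      cp_split m' (k * (m' + 1) + m') v hv'
    refine AddSubgroup.closure_induction
      (p := fun z _ => z * B = B * z) ?_ ?_ ?_ ?_ hsplit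
    · rintro z ⟨p, hp, q, hq, rfl⟩
      have e1 : q * B = B * q := h q hq B hB
      have e2 : p * B = B * p := ih p hp B hB
      rw [mul_assoc, e1, ← mul_assoc, e2, mul_assoc]
    · show (0 : R) * B = B * 0
      rw [zero_mul, mul_zero]
    · intro z₁ z₂ h₁ h₂ p₁ p₂
      show (z₁ + z₂) * B = B * (z₁ + z₂)
      rw [add_mul, mul_add, p₁, p₂]
    · intro z hz p
      show (-z) * B = B * (-z)
      rw [neg_mul, mul_neg, p]

theorem CM2 (h : ∀ x ∈ CP R m', ∀ y ∈ CP R n', x * y = y * x) : ∀ (l : ℕ), ∀ Y ∈ CP R (l * (n' + 1) + n'), ∀ (k : ℕ),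
    ∀ v ∈ CP R (k * (m' + 1) + m'), v * Y = Y * v := by
  intro l
  induction l with
  | zero =>
    intro Y hY k v hv
    exact CM1 m' n' h k v hv Y (by simpa using hY)
  | succ l ih =>
    intro Y hY k v hv
    have hY' : Y ∈ CP R ((l * (n' + 1) + n') + n' + 1) := by
      have e : (l * (n' + 1) + n') + n' + 1 = (l+1) * (n' + 1) + n' := by ring
      rw [e]; exact hY
    have hsplit : Y ∈ AddSubgroup.closure
        {p : R | ∃ u ∈ (CP R (l * (n' + 1) + n') : Set R), ∃ c ∈ (CP R n' : Set R), p = u * c} :=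
      cp_split n' (l * (n' + 1) + n') Y hY'
    refine AddSubgroup.closure_induction
      (p := fun z _ => v * z = z * v) ?_ ?_ ?_ ?_ hsplit
    · rintro z ⟨p, hp, q, hq, rfl⟩
      have e1 : v * p = p * v := ih p hp k v hv
      have e2 : v * q = q * v := CM1 m' n' h k v hv q hq
      rw [← mul_assoc, e1, mul_assoc, e2, ← mul_assoc]
    · show v * (0 : R) = 0 * v
      rw [zero_mul, mul_zero]
    · intro z₁ z₂ h₁ h₂ p₁ p₂
      show v * (z₁ + z₂) = (z₁ + z₂) * v
      rw [add_mul, mul_add, p₁, p₂]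
    · intro z hz p
      show v * (-z) = (-z) * v
      rw [neg_mul, mul_neg, p]

theorem bigComm (h : ∀ x ∈ CP R m', ∀ y ∈ CP R n', x * y = y * x) : ∀ X ∈ CP R (2*m'*n' + 2*m' + 2*n' + 1), ∀ Y ∈ CP R (2*m'*n' + 2*m' + 2*n' + 1),
    X * Y = Y * X := by
  intro X hX Y hY
  have hX' : X ∈ CP R ((2*n'+1) * (m' + 1) + m') := by
    have e : 2*m'*n' + 2*m' + 2*n' + 1 = (2*n'+1) * (m' + 1) + m' := by ring
    rw [← e]; exact hX
  have hY' : Y ∈ CP R ((2*m'+1) * (n' + 1) + n') := by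
    have e : 2*m'*n' + 2*m' + 2*n' + 1 = (2*m'+1) * (n' + 1) + n' := by ring
    rw [← e]; exact hY
  exact CM2 m' n' h (2*m'+1) Y hY' (2*n'+1) X hX'

end Reduce

section AMachine

variable {R : Type*} [NonUnitalRing R] {K : ℕ} {β : R}

theorem M3 (hP : ∀ X ∈ CP R (K+1), ∀ Y ∈ CP R (K+1), X * Y = Y * X) (hβ : β ∈ CP R (K+1))
    {d s d' : R} (hd : d ∈ CP R 0) (hs : s ∈ CP R K) (hd' : d' ∈ CP R 0) :
    (β*d - d*β)*s*d' = d*s*(β*d' - d'*β) := by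
  have hds : d*s ∈ CP R (K+1) := cp_mul' hd hs (by omega)
  have hsd' : s*d' ∈ CP R (K+1) := cp_mul' hs hd' (by omega)
  have e1 : β*(d*s) = (d*s)*β := hP β hβ _ hds
  have e2 : β*(s*d') = (s*d')*β := hP β hβ _ hsd'
  have key : (β*d - d*β)*s*d' - d*s*(β*d' - d'*β)
      = (β*(d*s) - (d*s)*β)*d' + d*((s*d')*β - β*(s*d')) := by noncomm_ring
  rw [e1, e2] at key
  simp only [sub_self, zero_mul, mul_zero, add_zero, zero_add] at key
  exact sub_eq_zero.mp key

theorem M5 (hP : ∀ X ∈ CP R (K+1), ∀ Y ∈ CP R (K+1), X * Y = Y * X) (hβ : β ∈ CP R (K+1))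
    {β' s d' : R} (hβ' : β' ∈ CP R (K+1)) (hs : s ∈ CP R K) (hd' : d' ∈ CP R 0) (u v : R) :
    (u*β' - β'*u) * ((β*v - v*β)*s*d' - v*s*(β*d' - d'*β)) = 0 := by
  have e1 := M3 hP hβ (mem_comm' u (β'*v)) hs hd'
  have e2 := M3 hP hβ (mem_comm' u v) hs hd'
  have c1 : β*β' = β'*β := hP β hβ β' hβ'
  have c2 : (β*u - u*β)*β' = β'*(β*u - u*β) := hP _ (cp_lie (K+1) β hβ u) β' hβ'
  have key : (u*β' - β'*u) * ((β*v - v*β)*s*d' - v*s*(β*d' - d'*β))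
      = ((β*(u*(β'*v) - (β'*v)*u) - (u*(β'*v) - (β'*v)*u)*β)*s*d'
          - (u*(β'*v) - (β'*v)*u)*s*(β*d' - d'*β))
        - β'*((β*(u*v - v*u) - (u*v - v*u)*β)*s*d' - (u*v - v*u)*s*(β*d' - d'*β))
        - ((β*u - u*β)*β' - β'*(β*u - u*β))*(v*s*d')
        - (u*(β*β' - β'*β)*v - (β*β' - β'*β)*(v*u))*(s*d') := by noncomm_ring
  rw [sub_eq_zero_of_eq e1, sub_eq_zero_of_eq e2, sub_eq_zero_of_eq c1,
    sub_eq_zero_of_eq c2] at key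
  simpa using key

theorem M11Gen {β' T : R} (hz : ∀ u : R, (u*β' - β'*u)*T = 0) (u y : R) :
    (u*β' - β'*u)*y*T = 0 := by
  have i1 := hz (u*y)
  have i2 := hz y
  have key : (u*β' - β'*u)*y*T = ((u*y)*β' - β'*(u*y))*T - u*((y*β' - β'*y)*T) := by noncomm_ring
  rw [i1, i2] at key
  simpa using key

theorem M12 (hP : ∀ X ∈ CP R (K+1), ∀ Y ∈ CP R (K+1), X * Y = Y * X) (hβ : β ∈ CP R (K+1))
    {β' s : R} (hβ' : β' ∈ CP R (K+1)) (hs : s ∈ CP R K) (u y v v' : R) :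
    (u*β' - β'*u)*y*((β*v - v*β)*s*(β*v' - v'*β)) = 0 := by
  have z0 : β*(β*v' - v'*β) - (β*v' - v'*β)*β = 0 :=
    sub_eq_zero_of_eq (hP β hβ _ (cp_lie (K+1) β hβ v'))
  have hz : ∀ u : R, (u*β' - β'*u)*((β*v - v*β)*s*(β*v' - v'*β)) = 0 := by
    intro u
    have m5 := M5 hP hβ hβ' hs (mem_comm' β v') u v
    rw [z0] at m5
    simpa using m5
  exact M11Gen hz u y

def QP {R : Type*} [NonUnitalRing R] (β : R) (k : ℕ) (g : R) : Prop :=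
  ∀ y s v' : R, s ∈ CP R k → g * (y * (s * (β * v' - v' * β))) = 0

theorem QBase (hP : ∀ X ∈ CP R (K+1), ∀ Y ∈ CP R (K+1), X * Y = Y * X) (hβ : β ∈ CP R (K+1))
    {β' : R} (hβ' : β' ∈ CP R (K+1)) (u y₀ v : R) :
    QP β K ((u*β' - β'*u)*(y₀*(β*v - v*β))) := by
  intro y s v' hs
  have i1 := M12 hP hβ hβ' hs u y₀ (v*y) v'
  have i2 := M12 hP hβ hβ' hs u (y₀*v) y v'
  have key : ((u*β' - β'*u)*(y₀*(β*v - v*β)))*(y*(s*(β*v' - v'*β)))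
      = (u*β' - β'*u)*y₀*((β*(v*y) - (v*y)*β)*s*(β*v' - v'*β))
        - (u*β' - β'*u)*(y₀*v)*((β*y - y*β)*s*(β*v' - v'*β)) := by noncomm_ring
  rw [i1, i2] at key
  simpa using key

theorem QDesc {k : ℕ} {g : R} (hq : QP β (k+1) g) (y q b : R) :
    QP β k (g*(y*(q*b - b*q))) := by
  intro y₂ s v' hs
  have i1 := hq y ((q*(b*y₂) - (b*y₂)*q) * s) v' (cp_mul' (mem_comm' q (b*y₂)) hs (by omega))
  have i2 := hq (y*b) ((q*y₂ - y₂*q) * s) v' (cp_mul' (mem_comm' q y₂) hs (by omega))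
  have key : (g*(y*(q*b - b*q)))*(y₂*(s*(β*v' - v'*β)))
      = g*(y*(((q*(b*y₂) - (b*y₂)*q) * s)*(β*v' - v'*β)))
        - g*((y*b)*(((q*y₂ - y₂*q) * s)*(β*v' - v'*β))) := by noncomm_ring
  rw [i1, i2] at key
  simpa using key

theorem QTerm {g : R} (hq : QP β 0 g) (y q b Y v' : R) :
    g*(y*((q*b - b*q)*(Y*(β*v' - v'*β)))) = 0 := by
  have i1 := hq y (q*(b*Y) - (b*Y)*q) v' (mem_comm' q (b*Y))
  have i2 := hq (y*b) (q*Y - Y*q) v' (mem_comm' q Y)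
  have key : g*(y*((q*b - b*q)*(Y*(β*v' - v'*β))))
      = g*(y*((q*(b*Y) - (b*Y)*q)*(β*v' - v'*β))) - g*((y*b)*((q*Y - Y*q)*(β*v' - v'*β))) := by
    noncomm_ring
  rw [i1, i2] at key
  simpa using key

end AMachine

section Chains

variable {R : Type*} [NonUnitalRing R]

def lchain (a : R) : ℕ → Set R
  | 0 => {a}
  | k + 1 => {w | ∃ x t, t ∈ lchain a k ∧ w = a * x * t}

theorem lchain_rapp {a : R} : ∀ {k : ℕ} {t : R}, t ∈ lchain a k → ∀ x, t * x * a ∈ lchain a (k+1) := by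
  intro k
  induction k with
  | zero =>
    intro t ht x
    have h : t = a := ht
    rw [h]
    exact ⟨x, a, rfl, rfl⟩
  | succ k ih =>
    intro t ht x
    obtain ⟨y, t', ht', rfl⟩ := ht
    exact ⟨y, t' * x * a, ih ht' x, by noncomm_ring⟩

theorem lchain_rpeel {a : R} : ∀ {k : ℕ} {w : R}, w ∈ lchain a (k+1) →
    ∃ t x, t ∈ lchain a k ∧ w = t * x * a := by
  intro k
  induction k with
  | zero =>
    intro w hw
    obtain ⟨x, t, ht, rfl⟩ := hw
    have h : t = a := ht
    exact ⟨a, x, rfl, by rw [h]⟩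
  | succ k ih =>
    intro w hw
    obtain ⟨x, t, ht, rfl⟩ := hw
    obtain ⟨t', y, ht', rfl⟩ := ih ht
    exact ⟨a*x*t', y, ⟨x, t', ht', rfl⟩, by noncomm_ring⟩

theorem lchain_kill (hR : IsSemiprimeRing R) {a : R} {k : ℕ}
    (h : ∀ w ∈ lchain a (k+1), w = 0) : ∀ w ∈ lchain a k, w = 0 := by
  intro w hw
  refine hR w (fun x => ?_)
  have h1 : w * x * a = 0 := h _ (lchain_rapp hw x)
  cases k with
  | zero =>
    have he : w = a := hw
    rw [he] at h1 ⊢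
    exact h1
  | succ k =>
    obtain ⟨y, t, ht, rfl⟩ := hw
    have key : (a*y*t)*x*(a*y*t) = (a*y*t)*x*(a*y*t) := rfl
    have key2 : (a*y*t)*x*(a*y*t) = (((a*y*t)*x*a)*y)*t := by noncomm_ring
    rw [key2, h1, zero_mul, zero_mul]

end Chains

section ACore

variable {R : Type*} [NonUnitalRing R] {K : ℕ} {β : R}

theorem QCore (v₀ : R) : ∀ (k : ℕ) (g : R), QP β k g →
    ∀ t ∈ lchain (β*v₀ - v₀*β) k, ∀ y Y v' : R, g*(y*(t*(Y*(β*v' - v'*β)))) = 0 := by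
  intro k
  induction k with
  | zero =>
    intro g hq t ht y Y v'
    have he : t = β*v₀ - v₀*β := ht
    subst he
    have e : v₀*(-β) - (-β)*v₀ = β*v₀ - v₀*β := by noncomm_ring
    have hterm := QTerm hq y v₀ (-β) Y v'
    rw [e] at hterm
    exact hterm
  | succ k ih =>
    intro g hq t ht y Y v'
    obtain ⟨x, t', ht', rfl⟩ := ht
    have e : v₀*(-β) - (-β)*v₀ = β*v₀ - v₀*β := by noncomm_ring
    have hq2 : QP β k (g*(y*(β*v₀ - v₀*β))) := by
      have h0 := QDesc hq y v₀ (-β)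
      rw [e] at h0
      exact h0
    have IH := ih _ hq2 t' ht' x Y v'
    have key : g*(y*(((β*v₀ - v₀*β)*x*t')*(Y*(β*v' - v'*β))))
        = (g*(y*(β*v₀ - v₀*β)))*(x*(t'*(Y*(β*v' - v'*β)))) := by noncomm_ring
    rw [key]
    exact IH

theorem Akill (hR : IsSemiprimeRing R)
    (hP : ∀ X ∈ CP R (K+1), ∀ Y ∈ CP R (K+1), X * Y = Y * X) (hβ : β ∈ CP R (K+1))
    (v₀ : R) : β * v₀ = v₀ * β := by
  have e : v₀*(-β) - (-β)*v₀ = β*v₀ - v₀*β := by noncomm_ring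
  have hq0 : ∀ y₀ : R, QP β K ((β*v₀ - v₀*β)*(y₀*(β*v₀ - v₀*β))) := by
    intro y₀
    have h0 := QBase hP hβ (neg_mem hβ) v₀ y₀ v₀
    rw [e] at h0
    exact h0
  have FIN : ∀ y₀ y Y t, t ∈ lchain (β*v₀ - v₀*β) K →
      ((β*v₀ - v₀*β)*(y₀*(β*v₀ - v₀*β)))*(y*(t*(Y*(β*v₀ - v₀*β)))) = 0 :=
    fun y₀ y Y t ht => QCore v₀ K _ (hq0 y₀) t ht y Y v₀
  have KILL3 : ∀ w ∈ lchain (β*v₀ - v₀*β) (K+1+1+1), w = 0 := by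
    intro w hw
    obtain ⟨z₁, t₁, ht₁, rfl⟩ := hw
    obtain ⟨z₂, t₂, ht₂, rfl⟩ := ht₁
    obtain ⟨t₃, x, ht₃, heq⟩ := lchain_rpeel ht₂
    rw [heq]
    have key : (β*v₀ - v₀*β)*z₁*((β*v₀ - v₀*β)*z₂*(t₃*x*(β*v₀ - v₀*β)))
        = ((β*v₀ - v₀*β)*(z₁*(β*v₀ - v₀*β)))*(z₂*(t₃*(x*(β*v₀ - v₀*β)))) := by noncomm_ring
    rw [key]
    exact FIN z₁ z₂ x t₃ ht₃
  have down : ∀ (j : ℕ), (∀ w ∈ lchain (β*v₀ - v₀*β) j, w = 0) → β*v₀ - v₀*β = 0 := by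
    intro j
    induction j with
    | zero => intro hj; exact hj _ rfl
    | succ j ih => intro hj; exact ih (lchain_kill hR hj)
  exact sub_eq_zero.mp (down (K+1+1+1) KILL3)

end ACore

section Descent

variable {R : Type*} [NonUnitalRing R]

theorem Bdesc (hR : IsSemiprimeRing R) (j : ℕ)
    (hc : ∀ z ∈ CP R (j+1), ∀ r : R, z * r = r * z) :
    ∀ s ∈ CP R j, ∀ x₀ : R, s * x₀ = x₀ * s := by
  intro s hs x₀
  have hw : s*x₀ - x₀*s ∈ CP R j := cp_lie j s hs x₀
  set w := s*x₀ - x₀*s with hwdef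
  have hwC : w ∈ CP R 0 := by rw [hwdef]; exact mem_comm' s x₀
  have c_zpp : ∀ u r : R, (w*(u*w - w*u))*r = r*(w*(u*w - w*u)) :=
    fun u r => hc _ (cp_mul' hw (mem_comm' u w) (by omega)) r
  have c_zp : ∀ u v r : R, (w*(u*v - v*u))*r = r*(w*(u*v - v*u)) :=
    fun u v r => hc _ (cp_mul' hw (mem_comm' u v) (by omega)) r
  have c_q : ∀ u v r : R, (w*(u*(w*v) - (w*v)*u))*r = r*(w*(u*(w*v) - (w*v)*u)) :=
    fun u v r => hc _ (cp_mul' hw (mem_comm' u (w*v)) (by omega)) r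
  have eq_q : ∀ u v : R, w*(u*(w*v) - (w*v)*u) = (w*(u*w - w*u))*v + (w*(u*v - v*u))*w := by
    intro u v
    have k1 : w*(u*(w*v) - (w*v)*u) - ((w*(u*w - w*u))*v + (w*(u*v - v*u))*w)
        = w*(w*(u*v - v*u)) - (w*(u*v - v*u))*w := by noncomm_ring
    have k2 : w*(w*(u*v - v*u)) - (w*(u*v - v*u))*w = 0 := by
      rw [c_zp u v w]; exact sub_self _
    exact sub_eq_zero.mp (k1.trans k2)
  have B10 : ∀ u v r : R,
      (w*(u*w - w*u))*(v*r - r*v) + (w*(u*v - v*u))*(w*r - r*w) = 0 := by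
    intro u v r
    have hc1 : (w*(u*(w*v) - (w*v)*u))*r - r*(w*(u*(w*v) - (w*v)*u)) = 0 :=
      sub_eq_zero_of_eq (c_q u v r)
    rw [eq_q u v] at hc1
    have k : ((w*(u*w - w*u))*v + (w*(u*v - v*u))*w)*r
          - r*((w*(u*w - w*u))*v + (w*(u*v - v*u))*w)
        = (w*(u*w - w*u))*(v*r - r*v) + (w*(u*v - v*u))*(w*r - r*w)
          + ((w*(u*w - w*u))*r - r*(w*(u*w - w*u)))*v
          + ((w*(u*v - v*u))*r - r*(w*(u*v - v*u)))*w := by noncomm_ring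
    rw [sub_eq_zero_of_eq (c_zpp u r), sub_eq_zero_of_eq (c_zp u v r), hc1] at k
    simp only [zero_mul, add_zero] at k
    exact k.symm
  have B11 : ∀ u v : R, (w*(u*w - w*u))*(v*w - w*v) = 0 := by
    intro u v
    have := B10 u v w
    simpa using this
  have B12 : ∀ u v y : R, (w*(u*w - w*u))*(v*(y*w - w*y)) = 0 := by
    intro u v y
    have h1 := B11 u (v*y)
    have h2 := B11 u v
    have k : (w*(u*w - w*u))*(v*(y*w - w*y))
        = (w*(u*w - w*u))*((v*y)*w - w*(v*y)) - ((w*(u*w - w*u))*(v*w - w*v))*y := by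
      noncomm_ring
    rw [h1, h2] at k
    simpa using k
  have AK : ∀ y : R, w*(y*w - w*y) = 0 := by
    intro y
    refine hR _ (fun V => ?_)
    have h1 := B12 y (V*w) y
    have k : (w*(y*w - w*y))*V*(w*(y*w - w*y)) = (w*(y*w - w*y))*((V*w)*(y*w - w*y)) := by
      noncomm_ring
    rw [k, h1]
  have cw2 : ∀ r : R, (w*w)*r = r*(w*w) := fun r => hc _ (cp_mul' hw hwC (by omega)) r
  have cws : ∀ r : R, (w*s)*r = r*(w*s) := fun r => hc _ (cp_mul' hwC hs (by omega)) r
  have hw2 : w*w = -((w*x₀ - x₀*w)*s) := by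
    have h1 := cws x₀
    have k : w*w - (-((w*x₀ - x₀*w)*s)) = (w*s)*x₀ - x₀*(w*s) := by
      rw [hwdef]; noncomm_ring
    rw [sub_eq_zero_of_eq h1] at k
    exact sub_eq_zero.mp k
  have hw3 : w*(w*w) = 0 := by
    rw [hw2]
    have h1 := AK x₀
    have k : w*(-((w*x₀ - x₀*w)*s)) = (w*(x₀*w - w*x₀))*s := by noncomm_ring
    rw [k, h1, zero_mul]
  have hw2z : w*w = 0 := by
    refine hR _ (fun x => ?_)
    have k : (w*w)*x*(w*w) = x*((w*(w*w))*w) := by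
      rw [cw2 x]; noncomm_ring
    rw [k, hw3, zero_mul, mul_zero]
  have hwz : w = 0 := by
    refine hR _ (fun y => ?_)
    have h1 := AK y
    have k : w*y*w = w*(y*w - w*y) + (w*w)*y := by noncomm_ring
    rw [k, h1, hw2z, zero_mul, zero_add]
  have : s*x₀ - x₀*s = 0 := by rw [← hwdef]; exact hwz
  exact sub_eq_zero.mp this

theorem central_down (hR : IsSemiprimeRing R) :
    ∀ (j : ℕ), (∀ z ∈ CP R j, ∀ r : R, z * r = r * z) →
    ∀ z ∈ CP R 0, ∀ r : R, z * r = r * z := by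
  intro j
  induction j with
  | zero => exact id
  | succ j ih =>
    intro hcj
    exact ih (fun s hs r => Bdesc hR j hcj s hs r)

theorem final_comm (hR : IsSemiprimeRing R)
    (hc : ∀ z ∈ CP R 0, ∀ r : R, z * r = r * z) : ∀ x y : R, x * y = y * x := by
  intro x y
  have hcc : ∀ a b r : R, (a*b - b*a)*r = r*(a*b - b*a) := fun a b r => hc _ (mem_comm' a b) r
  have C1 : ∀ r : R, (x*y - y*x)*(r*y - y*r) = 0 := by
    intro r
    have i1 : (x*(y*r) - (y*r)*x)*y = y*(x*(y*r) - (y*r)*x) := hcc x (y*r) y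
    have i2 : (x*r - r*x)*y = y*(x*r - r*x) := hcc x r y
    have i4 : (x*y - y*x)*y = y*(x*y - y*x) := hcc x y y
    have k : (x*y - y*x)*(r*y - y*r)
        = ((x*(y*r) - (y*r)*x)*y - y*(x*(y*r) - (y*r)*x))
          - y*((x*r - r*x)*y - y*(x*r - r*x))
          - ((x*y - y*x)*y - y*(x*y - y*x))*r := by noncomm_ring
    rw [sub_eq_zero_of_eq i1, sub_eq_zero_of_eq i2, sub_eq_zero_of_eq i4] at k
    simpa using k
  have hz : x*y - y*x = 0 := by
    refine hR _ (fun r => ?_)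
    have h1 := C1 (r*x)
    have h2 := C1 r
    have k : (x*y - y*x)*r*(x*y - y*x)
        = (x*y - y*x)*((r*x)*y - y*(r*x)) - ((x*y - y*x)*(r*y - y*r))*x := by noncomm_ring
    rw [h1, h2] at k
    simpa using k
  exact sub_eq_zero.mp hz

end Descent

/-- in a semiprime ring, [[R,R]^m, [R,R]^n] = 0 implies R is commutative. -/
theorem stmt10 (R : Type*) [NonUnitalRing R] (hR : IsSemiprimeRing R)
    (m n : ℕ) (hm : 1 ≤ m) (hn : 1 ≤ n)
    (h : ∀ x ∈ sgPow R (commSG R Set.univ Set.univ) (m - 1),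
         ∀ y ∈ sgPow R (commSG R Set.univ Set.univ) (n - 1), x * y = y * x) :
    ∀ x y : R, x * y = y * x := by
  obtain ⟨m', rfl⟩ : ∃ m', m = m' + 1 := ⟨m - 1, by omega⟩
  obtain ⟨n', rfl⟩ : ∃ n', n = n' + 1 := ⟨n - 1, by omega⟩
  simp only [Nat.add_sub_cancel] at h
  have hP := bigComm m' n' h
  have hA : ∀ z ∈ CP R (2*m'*n' + 2*m' + 2*n' + 1), ∀ r : R, z * r = r * z :=
    fun z hz r => Akill hR hP hz r
  have h0 := central_down hR (2*m'*n' + 2*m' + 2*n' + 1) hA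
  exact final_comm hR h0
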